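/- Let Λ be a lattice in a locally compact abelian group G, B a fundamental domain for Λ in G, and J_B(x,ω) = conj(ω(⌊x⌋_B)). If f : G → ℂ is a continuous Λ-periodic function vanishing on ∂B, then the function G(x,ω) = f(x)J_B(x,ω) is a continuous quasiperiodic function on G × Ĝ, i.e., G is continuous and satisfies G(xλ, ωτ) = conj(ω(λ)) G(x,ω) for all λ ∈ Λ, τ ∈ Λ^⊥. -/

import Mathlib

/-- `B` is a fundamental domain for the subgroup `Λ` in `G`. -/
def IsFundDomain {G : Type*} [Group G] (Λ : Subgroup G) (B : Set G) : Prop :=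
  ∀ x : G, ∃! p : B × Λ, x = (p.1 : G) * (p.2 : G)

/-- The annihilator `Λ^⊥ ⊆ Ĝ` of a subgroup `Λ ⊆ G`. -/
def annih {G : Type*} [CommGroup G] [TopologicalSpace G] [IsTopologicalGroup G]
    (Λ : Subgroup G) : Subgroup (PontryaginDual G) where
  carrier := {ω | ∀ l ∈ Λ, ω l = 1}
  one_mem' := by intro l _; rfl
  mul_mem' := by
    intro a b ha hb l hl
    have : (a * b) l = a l * b l := rfl
    rw [this, ha l hl, hb l hl, mul_one]
  inv_mem' := by
    intro a ha l hl
    have : (a⁻¹ : PontryaginDual _) l = (a l)⁻¹ := rfl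
    rw [this, ha l hl, inv_one]

theorem fl_unique {G : Type*} [Group G] (Λ : Subgroup G) (B : Set G)
    (hB : IsFundDomain Λ B) (fl : G → Λ) (hfl : ∀ x : G, x * ((fl x : G))⁻¹ ∈ B)
    (x : G) (l : Λ) (h : x * (l : G)⁻¹ ∈ B) : l = fl x := by
  obtain ⟨p, -, hu⟩ := hB x
  have h1 : (⟨⟨x * (l : G)⁻¹, h⟩, l⟩ : B × Λ) = p := by
    apply hu; simp
  have h2 : (⟨⟨x * ((fl x : G))⁻¹, hfl x⟩, fl x⟩ : B × Λ) = p := by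
    apply hu; simp
  have := h1.trans h2.symm
  exact congrArg Prod.snd this

theorem mul_JB_continuous_quasiperiodic
    {G : Type*} [CommGroup G] [TopologicalSpace G] [IsTopologicalGroup G]
    [LocallyCompactSpace G] [T2Space G]
    (Λ : Subgroup G) [DiscreteTopology Λ] [CompactSpace (G ⧸ Λ)]
    (B : Set G) (hB : IsFundDomain Λ B)
    (fl : G → Λ) (hfl : ∀ x : G, x * ((fl x : G))⁻¹ ∈ B)
    (f : G → ℂ) (hf_cont : Continuous f)
    (hf_per : ∀ (x : G) (l : Λ), f (x * l) = f x)
    (hf_bdry : ∀ x ∈ frontier B, f x = 0) :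
    Continuous (fun p : G × PontryaginDual G =>
        f p.1 * (starRingEnd ℂ) ((p.2 (fl p.1 : G) : ℂ))) ∧
    (∀ (x : G) (ω : PontryaginDual G) (l : Λ) (τ : annih Λ),
      f (x * l) * (starRingEnd ℂ) (((ω * (τ : PontryaginDual G)) (fl (x * l) : G) : ℂ)) =
        (starRingEnd ℂ) ((ω (l : G) : ℂ)) *
          (f x * (starRingEnd ℂ) ((ω (fl x : G) : ℂ)))) := by
  have key : ∀ (x : G) (l : Λ), fl (x * l) = fl x * l := by
    intro x l
    refine (fl_unique Λ B hB fl hfl (x * l) (fl x * l) ?_).symm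
    have : x * (l : G) * ((fl x : G) * (l : G))⁻¹ = x * ((fl x : G))⁻¹ := by group
    rw [Subgroup.coe_mul, this]
    exact hfl x
  constructor
  · -- continuity
    rw [continuous_iff_continuousAt]
    rintro ⟨x, ω⟩
    by_cases hx : x * ((fl x : G))⁻¹ ∈ interior B
    · -- fl locally constant near x
      have heval : Continuous fun η : PontryaginDual G => η (fl x : G) := by
        have h1 : Continuous fun η : PontryaginDual G =>
            ContinuousMonoidHom.toContinuousMap η :=
          (ContinuousMonoidHom.isInducing_toContinuousMap G Circle).continuous
        have h2 : Continuous fun g : C(G, Circle) => g (fl x : G) :=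
          continuous_eval_const _
        exact h2.comp h1
      have hcont : Continuous (fun p : G × PontryaginDual G =>
          f p.1 * (starRingEnd ℂ) ((p.2 (fl x : G) : ℂ))) := by
        exact (hf_cont.comp continuous_fst).mul
          ((Complex.continuous_conj.comp (continuous_subtype_val.comp
            (heval.comp continuous_snd))))
      refine hcont.continuousAt.congr ?_
      have hopen : IsOpen {y : G | y * ((fl x : G))⁻¹ ∈ interior B} :=
        isOpen_interior.preimage (continuous_mul_right _)
      have hmem : (x, ω) ∈ {y : G | y * ((fl x : G))⁻¹ ∈ interior B} ×ˢ
          (Set.univ : Set (PontryaginDual G)) := ⟨hx, trivial⟩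
      filter_upwards [(hopen.prod isOpen_univ).mem_nhds hmem] with p hp
      have : fl x = fl p.1 :=
        fl_unique Λ B hB fl hfl p.1 (fl x) (interior_subset hp.1)
      rw [← this]
    · -- boundary case: f x = 0
      have hfr : x * ((fl x : G))⁻¹ ∈ frontier B := by
        rw [frontier, Set.mem_diff]
        exact ⟨subset_closure (hfl x), hx⟩
      have hfx : f x = 0 := by
        have := hf_per (x * ((fl x : G))⁻¹) (fl x)
        rw [inv_mul_cancel_right] at this
        rw [this]
        exact hf_bdry _ hfr
      have hval : (fun p : G × PontryaginDual G =>
          f p.1 * (starRingEnd ℂ) ((p.2 (fl p.1 : G) : ℂ))) (x, ω) = 0 := by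
        simp only [hfx, zero_mul]
      unfold ContinuousAt
      rw [hval, tendsto_zero_iff_norm_tendsto_zero]
      have hb : ∀ p : G × PontryaginDual G,
          ‖f p.1 * (starRingEnd ℂ) ((p.2 (fl p.1 : G) : ℂ))‖ = ‖f p.1‖ := by
        intro p
        rw [norm_mul, RCLike.norm_conj]
        rw [Circle.norm_coe, mul_one]
      simp only [hb]
      have : Filter.Tendsto (fun p : G × PontryaginDual G => ‖f p.1‖)
          (nhds (x, ω)) (nhds ‖f x‖) :=
        ((hf_cont.comp continuous_fst).norm).continuousAt
      rwa [hfx, norm_zero] at this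
  · -- quasiperiodicity
    intro x ω l τ
    rw [hf_per x l, key x l]
    have hτ : (τ : PontryaginDual G) ((fl x : G) * (l : G)) = 1 := by
      exact τ.2 _ (mul_mem (fl x).2 l.2)
    have hmul : (ω * (τ : PontryaginDual G)) ((fl x : G) * (l : G)) =
        ω ((fl x : G) * (l : G)) * (τ : PontryaginDual G) ((fl x : G) * (l : G)) := rfl
    rw [Subgroup.coe_mul, hmul, hτ, mul_one, map_mul]
    push_cast
    rw [map_mul]
    ring
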